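/- Fix β ∈ [1/8, 1/2) and let f:[0,1] → ℝ be the continuous piecewise linear function with f(0) = f(1) = 0, f(β) = f(1-β) = 1, linear on [0,β], [β, 1-β], and [1-β, 1]. View f' as a random variable on [0,1] with Lebesgue measure. Then for all 0 ≤ s < t ≤ 1, the conditional variance of f' given the interval [s,t] is at most the unconditional variance: Var[f' | [s,t]] ≤ Var(f') = 2/β. -/

import Mathlib

open MeasureTheory Set

/-- The conditional variance of `g` on the interval `[s,t]` (with respect to
normalized Lebesgue measure). -/
noncomputable def condVar (g : ℝ → ℝ) (s t : ℝ) : ℝ :=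
  (∫ u in s..t, (g u)^2) / (t - s) - ((∫ u in s..t, g u) / (t - s))^2

lemma intInt_lt (c : ℝ) (s t : ℝ) : IntervalIntegrable (fun u => if u < c then (1:ℝ) else 0) volume s t := by
  have h : (fun u => if u < c then (1:ℝ) else 0) = (Iio c).indicator (fun _ => (1:ℝ)) := by
    ext u; simp [Set.indicator_apply, Set.mem_Iio]
  rw [h, intervalIntegrable_iff]
  exact (MeasureTheory.integrableOn_const measure_Ioc_lt_top.ne).indicator measurableSet_Iio

lemma intInt_gt (c : ℝ) (s t : ℝ) : IntervalIntegrable (fun u => if c < u then (1:ℝ) else 0) volume s t := by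
  have h : (fun u => if c < u then (1:ℝ) else 0) = (Ioi c).indicator (fun _ => (1:ℝ)) := by
    ext u; simp [Set.indicator_apply, Set.mem_Ioi]
  rw [h, intervalIntegrable_iff]
  exact (MeasureTheory.integrableOn_const measure_Ioc_lt_top.ne).indicator measurableSet_Ioi

lemma int_lt (c s t : ℝ) (h : s ≤ t) :
    (∫ u in s..t, (if u < c then (1:ℝ) else 0)) = min t c - min s c := by
  have hae : (fun u => if u < c then (1:ℝ) else 0) =ᵐ[volume] (Iic c).indicator (fun _ => (1:ℝ)) := by
    have hc : ∀ᵐ u : ℝ ∂volume, u ≠ c := by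
      simp [ae_iff]
    filter_upwards [hc] with u hu
    by_cases h1 : u < c <;> simp [Set.indicator_apply, Set.mem_Iic, h1, le_iff_lt_or_eq, hu]
  rw [intervalIntegral.integral_of_le h, integral_congr_ae (ae_restrict_of_ae hae),
    setIntegral_indicator measurableSet_Iic]
  have hset : Ioc s t ∩ Iic c = Ioc s (min t c) := by
    ext x; simp [Set.mem_Ioc, Set.mem_Iic, le_min_iff]
  rw [hset, setIntegral_const, measureReal_def, Real.volume_Ioc, smul_eq_mul, mul_one]
  rcases le_or_gt c s with hcs | hcs
  · rw [min_eq_right hcs, min_eq_right (hcs.trans h),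
      ENNReal.ofReal_eq_zero.mpr (by linarith : c - s ≤ 0)]
    simp
  · rw [min_eq_left hcs.le, ENNReal.toReal_ofReal (sub_nonneg.mpr (le_min h hcs.le))]

lemma int_gt (c s t : ℝ) (h : s ≤ t) :
    (∫ u in s..t, (if c < u then (1:ℝ) else 0)) = max t c - max s c := by
  have heq : (fun u => if c < u then (1:ℝ) else 0) = (Ioi c).indicator (fun _ => (1:ℝ)) := by
    ext u; simp [Set.indicator_apply, Set.mem_Ioi]
  rw [intervalIntegral.integral_of_le h, heq, setIntegral_indicator measurableSet_Ioi]
  have hset : Ioc s t ∩ Ioi c = Ioc (max s c) t := by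
    ext x; simp [Set.mem_Ioc, Set.mem_Ioi, max_lt_iff]
  rw [hset, setIntegral_const, measureReal_def, Real.volume_Ioc, smul_eq_mul, mul_one]
  rcases le_or_gt c t with hct | hct
  · rw [max_eq_left hct, ENNReal.toReal_ofReal (sub_nonneg.mpr (max_le h hct))]
  · rw [max_eq_right hct.le, max_eq_right (h.trans hct.le),
      ENNReal.ofReal_eq_zero.mpr (by linarith : t - c ≤ 0)]
    simp

lemma g_eq (β : ℝ) (hβ : 0 < β) (hβ2 : β < 1/2) :
    (fun u => if u < β then 1/β else if u ≤ 1 - β then 0 else -(1/β)) =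
    fun u => (1/β) * (if u < β then (1:ℝ) else 0) - (1/β) * (if 1 - β < u then (1:ℝ) else 0) := by
  ext u
  rcases lt_or_ge u β with h1 | h1
  · rw [if_pos h1, if_pos h1, if_neg (by linarith : ¬ 1 - β < u)]; ring
  · rcases le_or_gt u (1-β) with h2 | h2
    · rw [if_neg (not_lt.2 h1), if_pos h2, if_neg (not_lt.2 h1), if_neg (not_lt.2 h2)]; ring
    · rw [if_neg (not_lt.2 h1), if_neg (not_le.2 h2), if_neg (not_lt.2 h1), if_pos h2]; ring

lemma gsq_eq (β : ℝ) (hβ : 0 < β) (hβ2 : β < 1/2) :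
    (fun u => ((if u < β then 1/β else if u ≤ 1 - β then 0 else -(1/β)) : ℝ)^2) =
    fun u => (1/β^2) * (if u < β then (1:ℝ) else 0) + (1/β^2) * (if 1 - β < u then (1:ℝ) else 0) := by
  ext u
  rcases lt_or_ge u β with h1 | h1
  · rw [if_pos h1, if_pos h1, if_neg (by linarith : ¬ 1 - β < u)]; ring
  · rcases le_or_gt u (1-β) with h2 | h2
    · rw [if_neg (not_lt.2 h1), if_pos h2, if_neg (not_lt.2 h1), if_neg (not_lt.2 h2)]; ring
    · rw [if_neg (not_lt.2 h1), if_neg (not_le.2 h2), if_neg (not_lt.2 h1), if_pos h2]; ring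

lemma gint (β s t : ℝ) (hβ : 0 < β) (hβ2 : β < 1/2) (h : s ≤ t) :
    (∫ u in s..t, (if u < β then 1/β else if u ≤ 1 - β then 0 else -(1/β))) =
      ((min t β - min s β) - (max t (1-β) - max s (1-β)))/β := by
  rw [g_eq β hβ hβ2, intervalIntegral.integral_sub ((intInt_lt β s t).const_mul _)
    ((intInt_gt (1-β) s t).const_mul _), intervalIntegral.integral_const_mul,
    intervalIntegral.integral_const_mul, int_lt _ _ _ h, int_gt _ _ _ h]
  ring

lemma gsqint (β s t : ℝ) (hβ : 0 < β) (hβ2 : β < 1/2) (h : s ≤ t) :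
    (∫ u in s..t, ((if u < β then 1/β else if u ≤ 1 - β then 0 else -(1/β)) : ℝ)^2) =
      ((min t β - min s β) + (max t (1-β) - max s (1-β)))/β^2 := by
  rw [show (fun u => ((if u < β then 1/β else if u ≤ 1 - β then 0 else -(1/β)) : ℝ)^2) = _ from gsq_eq β hβ hβ2,
    intervalIntegral.integral_add ((intInt_lt β s t).const_mul _)
    ((intInt_gt (1-β) s t).const_mul _), intervalIntegral.integral_const_mul,
    intervalIntegral.integral_const_mul, int_lt _ _ _ h, int_gt _ _ _ h]
  ring

lemma condVar_formula (β s t : ℝ) (hβ : 0 < β) (hβ2 : β < 1/2) (h : s < t) :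
    condVar (fun u => if u < β then 1/β else if u ≤ 1 - β then 0 else -(1/β)) s t
    = (((min t β - min s β) + (max t (1-β) - max s (1-β)))*(t-s)
        - ((min t β - min s β) - (max t (1-β) - max s (1-β)))^2)/(β^2*(t-s)^2) := by
  unfold condVar
  rw [gint β s t hβ hβ2 h.le, gsqint β s t hβ hβ2 h.le]
  have hL : t - s ≠ 0 := ne_of_gt (by linarith)
  field_simp

lemma main1 (β : ℝ) (hβ1 : 1/8 ≤ β) (hβ2 : β < 1/2) (s t : ℝ) (hs : 0 ≤ s) (hst : s < t)
    (ht : t ≤ 1) :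
    condVar (fun u => if u < β then 1/β else if u ≤ 1 - β then 0 else -(1/β)) s t ≤ 2/β := by
  have hβ : 0 < β := by linarith
  rw [condVar_formula β s t hβ hβ2 hst]
  set A := min t β - min s β with hAdef
  set B := max t (1-β) - max s (1-β) with hBdef
  have hL0 : (0:ℝ) < t - s := by linarith
  have hA0 : 0 ≤ A := sub_nonneg.2 (min_le_min hst.le le_rfl)
  have hB0 : 0 ≤ B := sub_nonneg.2 (max_le_max hst.le le_rfl)
  have key : (A+B)*(t-s) - (A-B)^2 ≤ 2*β*(t-s)^2 := by
    rcases hA0.eq_or_lt with hA | hA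
    · nlinarith [sq_nonneg ((t-s) - 2*B), mul_nonneg (sq_nonneg (t-s)) (by linarith : (0:ℝ) ≤ 2*β - 1/4)]
    rcases hB0.eq_or_lt with hB | hB
    · nlinarith [sq_nonneg ((t-s) - 2*A), mul_nonneg (sq_nonneg (t-s)) (by linarith : (0:ℝ) ≤ 2*β - 1/4)]
    have hsβ : s < β := by
      by_contra hc; push_neg at hc
      have h1 : min s β = β := min_eq_right hc
      have h2 : min t β ≤ β := min_le_right _ _
      rw [hAdef] at hA; linarith
    have h1βt : 1 - β < t := by
      by_contra hc; push_neg at hc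
      have h1 : max t (1-β) = 1-β := max_eq_right hc
      have h2 : 1-β ≤ max s (1-β) := le_max_right _ _
      rw [hBdef] at hB; linarith
    have hAe : A = β - s := by
      rw [hAdef, min_eq_right (by linarith : β ≤ t), min_eq_left hsβ.le]
    have hBe : B = t - (1-β) := by
      rw [hBdef, max_eq_left (by linarith : 1-β ≤ t), max_eq_right (by linarith : s ≤ 1-β)]
    have hAβ : A ≤ β := by rw [hAe]; linarith
    have hBβ : B ≤ β := by rw [hBe]; linarith
    have hLe : t - s = A + B + (1 - 2*β) := by rw [hAe, hBe]; ring
    have h3 : (A+B)*(1-2*β) ≤ 2*β*(1-2*β) :=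
      mul_le_mul_of_nonneg_right (by linarith : A+B ≤ 2*β) (by linarith)
    have h2 : A+B ≤ 2*β*(t-s) := by rw [hLe]; nlinarith [h3]
    nlinarith [sq_nonneg (A-B), mul_le_mul_of_nonneg_right h2 hL0.le]
  rw [div_le_div_iff₀ (by positivity) hβ]
  nlinarith [mul_le_mul_of_nonneg_right key hβ.le]

lemma main2 (β : ℝ) (hβ1 : 1/8 ≤ β) (hβ2 : β < 1/2) :
    condVar (fun u => if u < β then 1/β else if u ≤ 1 - β then 0 else -(1/β)) 0 1 = 2/β := by
  have hβ : 0 < β := by linarith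
  rw [condVar_formula β 0 1 hβ hβ2 (by norm_num), min_eq_right (by linarith : β ≤ 1),
    min_eq_left hβ.le, max_eq_left (by linarith : 1-β ≤ 1), max_eq_right (by linarith : (0:ℝ) ≤ 1-β)]
  field_simp
  ring

/-- For `β ∈ [1/8, 1/2)` and the derivative `g = f'` of the trapezoid function
with `f(0)=f(1)=0`, `f(β)=f(1-β)=1`, the conditional variance of `f'` on any
subinterval `[s,t] ⊆ [0,1]` is at most the unconditional variance `2/β`. -/
theorem trapezoid_conditional_variance (β : ℝ) (hβ1 : 1/8 ≤ β) (hβ2 : β < 1/2) :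
    let g : ℝ → ℝ := fun u => if u < β then 1/β else if u ≤ 1 - β then 0 else -(1/β)
    (∀ s t : ℝ, 0 ≤ s → s < t → t ≤ 1 → condVar g s t ≤ 2/β) ∧
    condVar g 0 1 = 2/β := by
  intro g
  exact ⟨fun s t hs hst ht => main1 β hβ1 hβ2 s t hs hst ht, main2 β hβ1 hβ2⟩
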